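/- In any nondegenerate triangle with circumcenter O, circumradius R and inradius r, the distance from O to the Nagel point N satisfies ON² = R² − 4Rr + 4r² = (R − 2r)². -/

import Mathlib

lemma distsq (X Y : EuclideanSpace ℝ (Fin 2)) :
    dist X Y ^ 2 = (X 0 - Y 0)^2 + (X 1 - Y 1)^2 := by
  rw [EuclideanSpace.dist_eq, Real.sq_sqrt (by positivity)]
  simp [Fin.sum_univ_two, Real.dist_eq, sq_abs]

lemma gram (u0 u1 v0 v1 w0 w1 : ℝ) :
    (u0^2+u1^2)*((v0^2+v1^2)*(w0^2+w1^2)) + 2*((u0*v0+u1*v1)*((v0*w0+v1*w1)*(u0*w0+u1*w1)))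
    - (u0^2+u1^2)*(v0*w0+v1*w1)^2 - (v0^2+v1^2)*(u0*w0+u1*w1)^2
    - (w0^2+w1^2)*(u0*v0+u1*v1)^2 = 0 := by ring

/-- in any nondegenerate triangle with circumcenter `O`, circumradius `R`
and inradius `r`, the Nagel point `N` satisfies `ON² = R² − 4Rr + 4r² = (R − 2r)²`. -/
theorem stmt_10 (A B C O N : EuclideanSpace ℝ (Fin 2)) (a b c s S R r : ℝ)
    (hABC : AffineIndependent ℝ ![A, B, C])
    (ha : a = dist B C) (hb : b = dist C A) (hc : c = dist A B)
    (hs : s = (a + b + c) / 2)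
    (hS : S = Real.sqrt (s * (s - a) * (s - b) * (s - c)))
    (hr : r = S / s)
    (hOA : dist O A = R) (hOB : dist O B = R) (hOC : dist O C = R)
    (hN : ∀ M : EuclideanSpace ℝ (Fin 2),
      ((s - a) + (s - b) + (s - c)) • (N - M) =
        (s - a) • (A - M) + (s - b) • (B - M) + (s - c) • (C - M)) :
    dist O N ^ 2 = R ^ 2 - 4 * R * r + 4 * r ^ 2 ∧ dist O N ^ 2 = (R - 2 * r) ^ 2 := by
  -- positivity facts
  have hBC : B ≠ C := by
    intro h
    have := hABC.injective (show ![A,B,C] 1 = ![A,B,C] 2 by simpa using h)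
    exact absurd this (by decide)
  have ha0 : 0 < a := ha ▸ dist_pos.2 hBC
  have hb0 : 0 ≤ b := hb ▸ dist_nonneg
  have hc0 : 0 ≤ c := hc ▸ dist_nonneg
  have hR0 : 0 ≤ R := hOA ▸ dist_nonneg
  have hs0 : 0 < s := by rw [hs]; linarith
  have hsa : 0 ≤ s - a := by
    have h1 : dist B C ≤ dist B A + dist A C := dist_triangle B A C
    rw [dist_comm B A, dist_comm A C] at h1
    rw [hs, ha, hb, hc]; linarith
  have hsb : 0 ≤ s - b := by
    have h1 : dist C A ≤ dist C B + dist B A := dist_triangle C B A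
    rw [dist_comm C B, dist_comm B A] at h1
    rw [hs, ha, hb, hc]; linarith
  have hsc : 0 ≤ s - c := by
    have h1 : dist A B ≤ dist A C + dist C B := dist_triangle A C B
    rw [dist_comm A C, dist_comm C B] at h1
    rw [hs, ha, hb, hc]; linarith
  have hsa' : 0 ≤ s - a := hsa
  -- Heron / S
  have hS0 : 0 ≤ S := hS ▸ Real.sqrt_nonneg _
  have hS2 : S ^ 2 = s * (s - a) * (s - b) * (s - c) := by
    rw [hS, Real.sq_sqrt (by positivity)]
  have hrs : S = r * s := by rw [hr]; field_simp
  -- coordinate squared-distance facts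
  have hA2 : (A 0 - O 0)^2 + (A 1 - O 1)^2 = R^2 := by
    rw [← distsq A O, dist_comm A O, hOA]
  have hB2 : (B 0 - O 0)^2 + (B 1 - O 1)^2 = R^2 := by
    rw [← distsq B O, dist_comm B O, hOB]
  have hC2 : (C 0 - O 0)^2 + (C 1 - O 1)^2 = R^2 := by
    rw [← distsq C O, dist_comm C O, hOC]
  have ha2 : (B 0 - C 0)^2 + (B 1 - C 1)^2 = a^2 := by rw [← distsq B C, ← ha]
  have hb2 : (C 0 - A 0)^2 + (C 1 - A 1)^2 = b^2 := by rw [← distsq C A, ← hb]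
  have hc2 : (A 0 - B 0)^2 + (A 1 - B 1)^2 = c^2 := by rw [← distsq A B, ← hc]
  -- dot products
  have hp : (A 0 - O 0)*(B 0 - O 0) + (A 1 - O 1)*(B 1 - O 1) = R^2 - c^2/2 := by
    linear_combination (hA2 + hB2 - hc2)/2
  have hq : (B 0 - O 0)*(C 0 - O 0) + (B 1 - O 1)*(C 1 - O 1) = R^2 - a^2/2 := by
    linear_combination (hB2 + hC2 - ha2)/2
  have ht : (A 0 - O 0)*(C 0 - O 0) + (A 1 - O 1)*(C 1 - O 1) = R^2 - b^2/2 := by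
    linear_combination (hA2 + hC2 - hb2)/2
  -- Gram determinant identity  →  (abc)² = 16 R² S²
  have hG := gram (A 0 - O 0) (A 1 - O 1) (B 0 - O 0) (B 1 - O 1) (C 0 - O 0) (C 1 - O 1)
  rw [hA2, hB2, hC2, hp, hq, ht] at hG
  have h16 : 16*(s*(s-a)*(s-b)*(s-c)) = 2*a^2*b^2+2*b^2*c^2+2*c^2*a^2-a^4-b^4-c^4 := by
    rw [hs]; ring
  have habc2 : (a*b*c)^2 = (4*R*S)^2 := by
    linear_combination (-4)*hG - R^2*h16 - 16*R^2*hS2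
  have habc : a*b*c = 4*R*S := by
    have hfac : (a*b*c - 4*R*S)*(a*b*c + 4*R*S) = 0 := by linear_combination habc2
    rcases mul_eq_zero.1 hfac with h | h
    · linarith
    · have h1 : 0 ≤ a*b*c := mul_nonneg (mul_nonneg ha0.le hb0) hc0
      have h2 : 0 ≤ R*S := mul_nonneg hR0 hS0
      linarith
  -- Nagel point coordinates
  have h0' := congrArg (fun v : EuclideanSpace ℝ (Fin 2) => v 0) (hN O)
  have h1' := congrArg (fun v : EuclideanSpace ℝ (Fin 2) => v 1) (hN O)
  simp only [PiLp.smul_apply, PiLp.add_apply, PiLp.sub_apply, smul_eq_mul] at h0' h1'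
  have h0 : s * (N 0 - O 0) = (s-a)*(A 0 - O 0) + (s-b)*(B 0 - O 0) + (s-c)*(C 0 - O 0) := by
    linear_combination h0' - 2*(N 0 - O 0)*hs
  have h1 : s * (N 1 - O 1) = (s-a)*(A 1 - O 1) + (s-b)*(B 1 - O 1) + (s-c)*(C 1 - O 1) := by
    linear_combination h1' - 2*(N 1 - O 1)*hs
  -- expansion of s²·ON²
  have expand : s^2 * ((O 0 - N 0)^2 + (O 1 - N 1)^2) =
      (s-a)^2*((A 0 - O 0)^2 + (A 1 - O 1)^2)
      + (s-b)^2*((B 0 - O 0)^2 + (B 1 - O 1)^2)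
      + (s-c)^2*((C 0 - O 0)^2 + (C 1 - O 1)^2)
      + 2*(s-a)*(s-b)*((A 0 - O 0)*(B 0 - O 0) + (A 1 - O 1)*(B 1 - O 1))
      + 2*(s-b)*(s-c)*((B 0 - O 0)*(C 0 - O 0) + (B 1 - O 1)*(C 1 - O 1))
      + 2*(s-a)*(s-c)*((A 0 - O 0)*(C 0 - O 0) + (A 1 - O 1)*(C 1 - O 1)) := by
    linear_combination
      (s*(N 0 - O 0) + ((s-a)*(A 0 - O 0) + (s-b)*(B 0 - O 0) + (s-c)*(C 0 - O 0)))*h0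
      + (s*(N 1 - O 1) + ((s-a)*(A 1 - O 1) + (s-b)*(B 1 - O 1) + (s-c)*(C 1 - O 1)))*h1
  rw [hA2, hB2, hC2, hp, hq, ht] at expand
  have hd : dist O N ^ 2 = (O 0 - N 0)^2 + (O 1 - N 1)^2 := distsq O N
  -- Q identity
  have hQ : (s-a)*(s-b)*c^2 + (s-b)*(s-c)*a^2 + (s-c)*(s-a)*b^2
      = s*(a*b*c) - 4*(s*(s-a)*(s-b)*(s-c)) := by
    rw [hs]; ring
  have hsum : (s-a)+(s-b)+(s-c) = s := by rw [hs]; ring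
  -- final assembly
  have main2 : s^2 * (dist O N ^ 2) = s^2 * (R^2 - 4*R*r + 4*r^2) := by
    linear_combination s^2*hd + expand + R^2*((s-a)+(s-b)+(s-c)+s)*hsum - hQ
      - s*habc - 4*hS2 + (4*(S + r*s) - 4*R*s)*hrs
  have hone : dist O N ^ 2 = R ^ 2 - 4 * R * r + 4 * r ^ 2 :=
    mul_left_cancel₀ (pow_ne_zero 2 hs0.ne') main2
  exact ⟨hone, by rw [hone]; ring⟩
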